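/- Let σ² > 0 and t > 0 be reals, and set s = max{σ², √(t·σ²)}. Then s·𝒞(t/s) ≥ σ²·𝒞(t/σ²)/4. -/

import Mathlib

open Real

noncomputable section

/-- The Bennett function `𝒞(x) = (x+1)·ln(x+1) − x`. -/
def bennett (x : ℝ) : ℝ := (x + 1) * Real.log (x + 1) - x

lemma aux_log_lb (x : ℝ) (hx : 0 ≤ x) : 2 * x / (x + 2) ≤ Real.log (1 + x) := by
  set f : ℝ → ℝ := fun z => Real.log (1 + z) - 2 * z / (z + 2) with hf
  have hH : ∀ y : ℝ, 0 ≤ y → HasDerivAt f (1 / (1 + y) - 4 / (y + 2) ^ 2) y := by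
    intro y hy
    have h1 : HasDerivAt (fun z : ℝ => 1 + z) 1 y := by
      simpa using (hasDerivAt_id y).const_add (1 : ℝ)
    have hlog : HasDerivAt (fun z : ℝ => Real.log (1 + z)) (1 / (1 + y)) y := by
      have := (Real.hasDerivAt_log (by linarith : (1 : ℝ) + y ≠ 0)).comp y h1
      simpa [one_div, Function.comp_def] using this
    have hnum : HasDerivAt (fun z : ℝ => 2 * z) 2 y := by
      simpa using (hasDerivAt_id y).const_mul (2 : ℝ)
    have hden : HasDerivAt (fun z : ℝ => z + 2) 1 y := by
      simpa using (hasDerivAt_id y).add_const (2 : ℝ)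
    have hdiv := hnum.div hden (by linarith : y + 2 ≠ 0)
    have hval : (2 * (y + 2) - 2 * y * 1) / (y + 2) ^ 2 = 4 / (y + 2) ^ 2 := by
      ring
    rw [hval] at hdiv
    exact hlog.sub hdiv
  have hmono : MonotoneOn f (Set.Ici (0 : ℝ)) := by
    apply monotoneOn_of_deriv_nonneg (convex_Ici 0)
    · exact fun y hy => (hH y hy).continuousAt.continuousWithinAt
    · intro y hy
      rw [interior_Ici] at hy
      exact (hH y (le_of_lt hy)).differentiableAt.differentiableWithinAt
    · intro y hy
      rw [interior_Ici] at hy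
      have hy' : (0 : ℝ) < y := hy
      rw [(hH y hy'.le).deriv]
      have h1 : (0 : ℝ) < 1 + y := by linarith
      have h2 : (0 : ℝ) < (y + 2) ^ 2 := by positivity
      rw [sub_nonneg, div_le_div_iff₀ h2 h1]
      nlinarith [sq_nonneg y]
  have h0 : f 0 = 0 := by simp [hf]
  have := hmono (Set.mem_Ici.2 (le_refl (0 : ℝ))) (Set.mem_Ici.2 hx) hx
  rw [h0] at this
  simpa [hf, sub_nonneg] using this

lemma bennett_nonneg (x : ℝ) (hx : 0 ≤ x) : 0 ≤ bennett x := by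
  have h := aux_log_lb x hx
  have h2 : (0:ℝ) < x + 2 := by linarith
  have h3 : 2 * x ≤ (x + 2) * Real.log (1 + x) := by
    rw [div_le_iff₀ h2] at h
    linarith
  have hlog : 0 ≤ Real.log (1 + x) := Real.log_nonneg (by linarith)
  unfold bennett
  have hcomm : Real.log (x + 1) = Real.log (1 + x) := by ring_nf
  rw [hcomm]
  nlinarith

lemma bennett_key (r : ℝ) (hr : 0 ≤ r) : bennett (r ^ 2) ≤ 4 * r * bennett r := by
  have hM : Real.log (1 + r ^ 2) ≤ r ^ 2 := by
    have := Real.log_le_sub_one_of_pos (by positivity : (0:ℝ) < 1 + r ^ 2)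
    linarith
  have hL2 : Real.log (1 + r ^ 2) ≤ 2 * Real.log (1 + r) := by
    have hle : (1 : ℝ) + r ^ 2 ≤ (1 + r) ^ 2 := by nlinarith
    calc Real.log (1 + r ^ 2) ≤ Real.log ((1 + r) ^ 2) :=
          Real.log_le_log (by positivity) hle
      _ = 2 * Real.log (1 + r) := by
          rw [Real.log_pow]; push_cast; ring
  have h3 : 2 * r ≤ (r + 2) * Real.log (1 + r) := by
    have h := aux_log_lb r hr
    have h2 : (0:ℝ) < r + 2 := by linarith
    rw [div_le_iff₀ h2] at h
    linarith
  have hLnn : 0 ≤ Real.log (1 + r) := Real.log_nonneg (by linarith)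
  unfold bennett
  have e1 : Real.log (r ^ 2 + 1) = Real.log (1 + r ^ 2) := by ring_nf
  have e2 : Real.log (r + 1) = Real.log (1 + r) := by ring_nf
  rw [e1, e2]
  set M := Real.log (1 + r ^ 2)
  set L := Real.log (1 + r)
  -- (r^2+1)*M - r^2 ≤ r^2*M + (M - r^2) ≤ r^2 * 2L ≤ 4r((r+1)L - r)
  nlinarith [mul_nonneg (sq_nonneg r) (sub_nonneg.2 hL2), mul_nonneg hr (sub_nonneg.2 h3)]

/-- Increasing the variance to `s = max{σ², √(t·σ²)}` loses at most a
factor `4`: `s·𝒞(t/s) ≥ σ²·𝒞(t/σ²)/4`. -/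
theorem bennett_increase_variance (σ2 t : ℝ) (hσ2 : 0 < σ2) (ht : 0 < t) :
    σ2 * bennett (t / σ2) / 4 ≤
      max σ2 (Real.sqrt (t * σ2)) * bennett (t / max σ2 (Real.sqrt (t * σ2))) := by
  rcases le_total t σ2 with h | h
  · -- max = σ2
    have hsq : Real.sqrt (t * σ2) ≤ σ2 := by
      have h1 : Real.sqrt (t * σ2) ≤ Real.sqrt (σ2 * σ2) :=
        Real.sqrt_le_sqrt (by nlinarith)
      rwa [Real.sqrt_mul_self hσ2.le] at h1
    rw [max_eq_left hsq]
    have hB : 0 ≤ bennett (t / σ2) := bennett_nonneg _ (by positivity)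
    nlinarith [mul_nonneg hσ2.le hB]
  · -- max = sqrt (t * σ2)
    have hs0 : 0 < Real.sqrt (t * σ2) := Real.sqrt_pos.2 (by positivity)
    set s := Real.sqrt (t * σ2) with hs
    have hss : s ^ 2 = t * σ2 := Real.sq_sqrt (by positivity)
    have hσs : σ2 ≤ s := by
      have h1 : Real.sqrt (σ2 * σ2) ≤ Real.sqrt (t * σ2) :=
        Real.sqrt_le_sqrt (by nlinarith)
      rwa [Real.sqrt_mul_self hσ2.le] at h1
    rw [max_eq_right hσs]
    set r := s / σ2 with hr
    have hr1 : 1 ≤ r := (one_le_div hσ2).2 hσs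
    have hr0 : 0 ≤ r := by linarith
    have hts : t / s = r := by
      rw [hr]
      field_simp
      nlinarith [hss]
    have htσ : t / σ2 = r ^ 2 := by
      rw [hr]
      field_simp
      nlinarith [hss]
    rw [hts, htσ]
    have hkey := bennett_key r hr0
    have hseq : s = σ2 * r := by
      rw [hr]; field_simp
    rw [hseq]
    nlinarith [hkey, hσ2.le]
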